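/- arXiv:1208.0140 — 2 statements merged into one kernel-verified Lean document; each statement's English description precedes it below -/
import Mathlib

section
/- For every integer n ≥ 2, the identity ∑_{i=2}^{n} (3^{n+1-i} - 2^{n+1-i}) + ∑_{1<i<j≤n+1} 3^{i-2}·2^{j-i-1} + ∑_{i=2}^{n+1} 2^{i-2} = 3^n - 2^n holds. -/
open Finset

private lemma shift_lemma (f : ℕ → ℤ) (n : ℕ) (hn : 2 ≤ n) :
    ∑ i ∈ Icc 2 (n + 1), f (n + 2 - i) = f n + ∑ i ∈ Icc 2 n, f (n + 1 - i) := by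
  have h1 : Icc 2 (n + 1) = insert 2 (Icc 3 (n + 1)) := by
    ext x; simp; omega
  rw [h1, Finset.sum_insert (by simp)]
  have h2 : Icc 3 (n + 1) = Finset.map (addRightEmbedding 1) (Icc 2 n) := by
    rw [Finset.map_add_right_Icc]
  rw [h2, Finset.sum_map]
  simp only [addRightEmbedding_apply]
  have e1 : n + 2 - 2 = n := by omega
  rw [e1]
  congr 1
  apply Finset.sum_congr rfl
  intro i hi
  simp only [mem_Icc] at hi
  congr 1
  omega

private lemma T_lemma : ∀ n : ℕ, 1 ≤ n →
    ∑ i ∈ Icc 2 (n + 1), (3 : ℤ) ^ (i - 2) * 2 ^ (n + 1 - i) = 3 ^ n - 2 ^ n := by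
  intro n hn
  induction n, hn using Nat.le_induction with
  | base => decide
  | succ n hn ih =>
    rw [Finset.sum_Icc_succ_top (by omega)]
    have : ∀ i ∈ Icc 2 (n + 1), (3 : ℤ) ^ (i - 2) * 2 ^ (n + 1 + 1 - i)
        = 2 * ((3 : ℤ) ^ (i - 2) * 2 ^ (n + 1 - i)) := by
      intro i hi
      simp only [mem_Icc] at hi
      have : n + 1 + 1 - i = (n + 1 - i) + 1 := by omega
      rw [this, pow_succ]; ring
    rw [Finset.sum_congr rfl this, ← Finset.mul_sum, ih]
    have h1 : n + 1 + 1 - (n + 1 + 1) = 0 := by omega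
    have h2 : n + 1 + 1 - 2 = n := by omega
    rw [h1, h2]
    ring

private lemma key : ∀ n : ℕ, 2 ≤ n →
    (∑ i ∈ Icc 2 n, ((3 : ℤ) ^ (n + 1 - i) - 2 ^ (n + 1 - i)))
      + (∑ i ∈ Icc 2 n, ∑ j ∈ Icc (i + 1) (n + 1), (3 : ℤ) ^ (i - 2) * 2 ^ (j - i - 1))
      + (∑ i ∈ Icc 2 (n + 1), (2 : ℤ) ^ (i - 2))
    = 3 ^ n - 2 ^ n := by
  intro n hn
  induction n, hn using Nat.le_induction with
  | base => decide
  | succ n hn ih =>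
    -- S1
    have hS1 : (∑ i ∈ Icc 2 (n + 1), ((3 : ℤ) ^ (n + 1 + 1 - i) - 2 ^ (n + 1 + 1 - i)))
        = (3 ^ n - 2 ^ n) + ∑ i ∈ Icc 2 n, ((3 : ℤ) ^ (n + 1 - i) - 2 ^ (n + 1 - i)) := by
      have := shift_lemma (fun k => (3 : ℤ) ^ k - 2 ^ k) n hn
      simpa using this
    -- S2
    have hS2 : (∑ i ∈ Icc 2 (n + 1), ∑ j ∈ Icc (i + 1) (n + 1 + 1), (3 : ℤ) ^ (i - 2) * 2 ^ (j - i - 1))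
        = (∑ i ∈ Icc 2 n, ∑ j ∈ Icc (i + 1) (n + 1), (3 : ℤ) ^ (i - 2) * 2 ^ (j - i - 1))
          + (3 ^ n - 2 ^ n) := by
      have step : ∀ i ∈ Icc 2 (n + 1),
          (∑ j ∈ Icc (i + 1) (n + 1 + 1), (3 : ℤ) ^ (i - 2) * 2 ^ (j - i - 1))
          = (∑ j ∈ Icc (i + 1) (n + 1), (3 : ℤ) ^ (i - 2) * 2 ^ (j - i - 1))
            + 3 ^ (i - 2) * 2 ^ (n + 1 - i) := by
        intro i hi
        simp only [mem_Icc] at hi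
        rw [Finset.sum_Icc_succ_top (by omega)]
        have e : n + 1 + 1 - i - 1 = n + 1 - i := by omega
        rw [e]
      rw [Finset.sum_congr rfl step, Finset.sum_add_distrib,
        Finset.sum_Icc_succ_top (by omega :
          2 ≤ n + 1) (fun i => ∑ j ∈ Icc (i + 1) (n + 1), (3 : ℤ) ^ (i - 2) * 2 ^ (j - i - 1)),
        T_lemma n (by omega)]
      have hempty : Icc (n + 1 + 1) (n + 1) = (∅ : Finset ℕ) := by
        apply Finset.Icc_eq_empty; omega
      rw [hempty]
      simp
    -- S3
    have hS3 : (∑ i ∈ Icc 2 (n + 1 + 1), (2 : ℤ) ^ (i - 2))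
        = (∑ i ∈ Icc 2 (n + 1), (2 : ℤ) ^ (i - 2)) + 2 ^ n := by
      rw [Finset.sum_Icc_succ_top (by omega)]
      have e : n + 1 + 1 - 2 = n := by omega
      rw [e]
    rw [hS1, hS2, hS3]
    have : (∑ i ∈ Icc 2 n, ((3 : ℤ) ^ (n + 1 - i) - 2 ^ (n + 1 - i)))
      + (∑ i ∈ Icc 2 n, ∑ j ∈ Icc (i + 1) (n + 1), (3 : ℤ) ^ (i - 2) * 2 ^ (j - i - 1))
      + (∑ i ∈ Icc 2 (n + 1), (2 : ℤ) ^ (i - 2)) = 3 ^ n - 2 ^ n := ih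
    ring_nf
    ring_nf at this
    linarith [this]

theorem stmt0 (n : ℕ) (hn : 2 ≤ n) :
    (∑ i ∈ Finset.Icc 2 n, (3 ^ (n + 1 - i) - 2 ^ (n + 1 - i)))
      + (∑ i ∈ Finset.Icc 2 n, ∑ j ∈ Finset.Icc (i + 1) (n + 1),
          3 ^ (i - 2) * 2 ^ (j - i - 1))
      + (∑ i ∈ Finset.Icc 2 (n + 1), 2 ^ (i - 2))
    = 3 ^ n - 2 ^ n := by
  have hle : ∀ k : ℕ, (2 : ℕ) ^ k ≤ 3 ^ k := fun k => Nat.pow_le_pow_left (by norm_num) k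
  zify [hle]
  exact key n hn
end

section
/- The number of bipartite noncrossing trees with ℓ ordered left vertices and r ordered right vertices (ℓ, r ≥ 1) equals the binomial coefficient C(ℓ+r-2, ℓ-1), i.e., it equals the number of weak compositions of ℓ-1 into r parts. -/
set_option linter.unusedSectionVars false

/-- The simple graph on `Fin ℓ ⊕ Fin r` whose edges are the pairs in `E`,
each pair `(p, q)` giving an edge between left vertex `p` and right vertex `q`. -/
def bipartiteGraph (ℓ r : ℕ) (E : Finset (Fin ℓ × Fin r)) :
    SimpleGraph (Fin ℓ ⊕ Fin r) :=
  SimpleGraph.fromEdgeSet ((fun p : Fin ℓ × Fin r => s(Sum.inl p.1, Sum.inr p.2)) '' ↑E)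

lemma bg_adj {ℓ r : ℕ} {E : Finset (Fin ℓ × Fin r)} {x y : Fin ℓ ⊕ Fin r} :
    (bipartiteGraph ℓ r E).Adj x y ↔
      (∃ p q, (p, q) ∈ E ∧ x = Sum.inl p ∧ y = Sum.inr q) ∨
      (∃ p q, (p, q) ∈ E ∧ x = Sum.inr q ∧ y = Sum.inl p) := by
  simp only [bipartiteGraph, SimpleGraph.fromEdgeSet_adj, Set.mem_image, Finset.mem_coe,
    Prod.exists, Sym2.eq, Sym2.rel_iff', Prod.mk.injEq, Prod.swap_prod_mk]
  constructor
  · rintro ⟨⟨p, q, hpq, (⟨rfl, rfl⟩ | ⟨rfl, rfl⟩)⟩, hne⟩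
    · exact Or.inl ⟨p, q, hpq, rfl, rfl⟩
    · exact Or.inr ⟨p, q, hpq, rfl, rfl⟩
  · rintro (⟨p, q, hpq, rfl, rfl⟩ | ⟨p, q, hpq, rfl, rfl⟩)
    · exact ⟨⟨p, q, hpq, Or.inl ⟨rfl, rfl⟩⟩, by simp⟩
    · exact ⟨⟨p, q, hpq, Or.inr ⟨rfl, rfl⟩⟩, by simp⟩

lemma bg_adj_inl_inr {ℓ r : ℕ} {E : Finset (Fin ℓ × Fin r)} {p : Fin ℓ} {q : Fin r} :
    (bipartiteGraph ℓ r E).Adj (Sum.inl p) (Sum.inr q) ↔ (p, q) ∈ E := by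
  rw [bg_adj]
  constructor
  · rintro (⟨p', q', h, hp, hq⟩ | ⟨p', q', h, hp, hq⟩) <;> simp_all
  · intro h; exact Or.inl ⟨p, q, h, rfl, rfl⟩

lemma bg_adj_inl {ℓ r : ℕ} {E : Finset (Fin ℓ × Fin r)} {p : Fin ℓ} {y : Fin ℓ ⊕ Fin r}
    (h : (bipartiteGraph ℓ r E).Adj (Sum.inl p) y) : ∃ q, y = Sum.inr q ∧ (p, q) ∈ E := by
  rw [bg_adj] at h
  rcases h with ⟨p', q', h, hp, hq⟩ | ⟨p', q', h, hp, hq⟩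
  · rw [Sum.inl.injEq] at hp; subst hp; exact ⟨q', hq, h⟩
  · exact absurd hp (by simp)

lemma bg_adj_inr {ℓ r : ℕ} {E : Finset (Fin ℓ × Fin r)} {q : Fin r} {y : Fin ℓ ⊕ Fin r}
    (h : (bipartiteGraph ℓ r E).Adj (Sum.inr q) y) : ∃ p, y = Sum.inl p ∧ (p, q) ∈ E := by
  rw [bg_adj] at h
  rcases h with ⟨p', q', h, hp, hq⟩ | ⟨p', q', h, hp, hq⟩
  · exact absurd hp (by simp)
  · rw [Sum.inr.injEq] at hp; subst hp; exact ⟨p', hq, h⟩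

lemma walk_support_eq {V : Type*} {G : SimpleGraph V} {u v : V} (p : G.Walk u v) :
    p.support = (List.range (p.length + 1)).map p.getVert := by
  induction p with
  | nil => simp [SimpleGraph.Walk.getVert]
  | cons h q ih =>
    rw [SimpleGraph.Walk.support_cons, SimpleGraph.Walk.length_cons, List.range_succ_eq_map]
    simp only [List.map_cons, List.map_map]
    rw [ih]
    congr 1

lemma cycle_getVert_inj {V : Type*} {G : SimpleGraph V} {u : V} {p : G.Walk u u}
    (hp : p.IsCycle) {i j : ℕ} (hi1 : 1 ≤ i) (hin : i ≤ p.length) (hj1 : 1 ≤ j)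
    (hjn : j ≤ p.length) (hne : i ≠ j) : p.getVert i ≠ p.getVert j := by
  have hnd := hp.2
  have htail : p.support.tail = (List.range p.length).map (fun k => p.getVert (k + 1)) := by
    rw [walk_support_eq p, List.range_succ_eq_map]
    simp [List.map_map, Function.comp]
  rw [htail] at hnd
  intro h
  have h1 : i - 1 < p.length := by omega
  have h2 : j - 1 < p.length := by omega
  have h1' : i - 1 < ((List.range p.length).map (fun k => p.getVert (k + 1))).length := by
    simpa using h1
  have h2' : j - 1 < ((List.range p.length).map (fun k => p.getVert (k + 1))).length := by
    simpa using h2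
  have := (List.Nodup.getElem_inj_iff hnd (hi := h1') (hj := h2')).mp (by
    simp only [List.getElem_map, List.getElem_range]
    rw [Nat.sub_add_cancel hi1, Nat.sub_add_cancel hj1, h])
  omega

def NC {ℓ r : ℕ} (E : Finset (Fin ℓ × Fin r)) : Prop :=
  ∀ ⦃p t : Fin ℓ⦄ ⦃q u : Fin r⦄, (p, q) ∈ E → (t, u) ∈ E → p < t → u < q → False

lemma bg_acyclic {ℓ r : ℕ} {E : Finset (Fin ℓ × Fin r)} (hnc : NC E) :
    (bipartiteGraph ℓ r E).IsAcyclic := by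
  classical
  intro v w hw
  -- the set of left vertices in the support
  set L : Finset (Fin ℓ) := @Finset.filter (Fin ℓ)
    (fun t => (Sum.inl t : Fin ℓ ⊕ Fin r) ∈ w.support) (fun t => Classical.dec _)
    Finset.univ with hL
  have hLne : L.Nonempty := by
    have hv := w.start_mem_support
    match hv2 : v with
    | Sum.inl p => exact ⟨p, by simp [hL, w.start_mem_support]⟩
    | Sum.inr q =>
      have hlen : 0 < w.length := by have := hw.three_le_length; omega
      have hadj := w.adj_getVert_succ hlen
      rw [SimpleGraph.Walk.getVert_zero] at hadj
      obtain ⟨p, hp, -⟩ := bg_adj_inr hadj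
      refine ⟨p, ?_⟩
      simp only [hL, Finset.mem_filter, Finset.mem_univ, true_and]
      rw [← hp]
      exact SimpleGraph.Walk.mem_support_iff_exists_getVert.mpr ⟨1, rfl, by omega⟩
  set t := L.max' hLne with htdef
  have ht : Sum.inl t ∈ w.support := by
    have := L.max'_mem hLne
    simp only [hL, Finset.mem_filter] at this
    exact this.2
  set w' := w.rotate _ ht with hw'def
  have hw' : w'.IsCycle := hw.rotate ht
  have hmax' : ∀ s : Fin ℓ, Sum.inl s ∈ w'.support → s ≤ t := by
    intro s hs
    have hperm := SimpleGraph.Walk.support_rotate w _ ht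
    have hmem : Sum.inl s ∈ w.support := by
      rw [w'.support_eq_cons] at hs
      rcases List.mem_cons.mp hs with h | h
      · rw [Sum.inl.injEq] at h; subst h; exact ht
      · exact List.mem_of_mem_tail (hperm.mem_iff.mp h)
    exact L.le_max' s (by simp [hL, hmem])
  set n := w'.length with hndef
  have hn : 3 ≤ n := hw'.three_le_length
  -- first neighbor
  have adj01 := w'.adj_getVert_succ (i := 0) (by omega)
  rw [SimpleGraph.Walk.getVert_zero] at adj01
  obtain ⟨u1, h1, e1⟩ := bg_adj_inl adj01
  -- last neighbor
  have adjlast := w'.adj_getVert_succ (i := n - 1) (by omega)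
  have hr1 : n - 1 + 1 = n := by omega
  rw [hr1] at adjlast
  rw [SimpleGraph.Walk.getVert_length] at adjlast
  obtain ⟨u2, h2, e2⟩ := bg_adj_inl adjlast.symm
  have hu12 : u1 ≠ u2 := by
    have := cycle_getVert_inj hw' (i := 1) (j := n - 1) le_rfl (by omega) (by omega) (by omega)
      (by omega)
    rw [h1, h2] at this
    exact fun hc => this (by rw [hc])
  rcases hu12.lt_or_gt with hlt | hlt
  · -- u1 < u2 : look at getVert (n-2)
    have adj2 := w'.adj_getVert_succ (i := n - 2) (by omega)
    have hr2 : n - 2 + 1 = n - 1 := by omega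
    rw [hr2, h2] at adj2
    obtain ⟨s, hs, es⟩ := bg_adj_inr adj2.symm
    have hst : s ≤ t := hmax' s (by
      rw [← hs]
      exact SimpleGraph.Walk.mem_support_iff_exists_getVert.mpr ⟨n - 2, rfl, by omega⟩)
    have hsne : s ≠ t := by
      have := cycle_getVert_inj hw' (i := n - 2) (j := n) (by omega) (by omega) (by omega)
        le_rfl (by omega)
      rw [hs, SimpleGraph.Walk.getVert_length] at this
      exact fun hc => this (by rw [hc])
    exact hnc es e1 (lt_of_le_of_ne hst hsne) hlt
  · -- u2 < u1 : look at getVert 2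
    have adj2 := w'.adj_getVert_succ (i := 1) (by omega)
    rw [h1] at adj2
    obtain ⟨s, hs, es⟩ := bg_adj_inr adj2
    have hst : s ≤ t := hmax' s (by
      rw [← hs]
      exact SimpleGraph.Walk.mem_support_iff_exists_getVert.mpr ⟨2, rfl, by omega⟩)
    have hsne : s ≠ t := by
      have := cycle_getVert_inj hw' (i := 2) (j := n) (by omega) (by omega) (by omega)
        le_rfl (by omega)
      rw [hs, SimpleGraph.Walk.getVert_length] at this
      exact fun hc => this (by rw [hc])
    exact hnc es e2 (lt_of_le_of_ne hst hsne) hlt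

/-! ### The staircase edge sets -/

def Ec (ℓ r : ℕ) (c : Fin (r + 1) → ℕ) : Finset (Fin ℓ × Fin r) :=
  Finset.univ.filter (fun e => c e.2.castSucc ≤ e.1.val ∧ e.1.val ≤ c e.2.succ)

lemma mem_Ec {ℓ r : ℕ} {c : Fin (r + 1) → ℕ} {p : Fin ℓ} {q : Fin r} :
    (p, q) ∈ Ec ℓ r c ↔ c q.castSucc ≤ p.val ∧ p.val ≤ c q.succ := by
  simp [Ec]

lemma Ec_NC {ℓ r : ℕ} {c : Fin (r + 1) → ℕ} (hc : Monotone c) : NC (Ec ℓ r c) := by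
  intro p t q u hpq htu hpt huq
  rw [mem_Ec] at hpq htu
  have h1 : u.succ ≤ q.castSucc := by
    rw [Fin.le_def, Fin.val_succ, Fin.coe_castSucc]
    rw [Fin.lt_def] at huq
    omega
  have : t.val ≤ p.val := le_trans htu.2 (le_trans (hc h1) hpq.1)
  rw [Fin.lt_def] at hpt; omega

section staircase

variable {ℓ r : ℕ} {c : Fin (r + 1) → ℕ} (hℓ : 1 ≤ ℓ) (hr : 1 ≤ r)
  (hc : Monotone c) (h0 : c 0 = 0) (hlast : c (Fin.last r) = ℓ - 1)

include hℓ hc hlast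

lemma c_ub (j : Fin (r + 1)) : c j ≤ ℓ - 1 := hlast ▸ hc (Fin.le_last j)

lemma c_lt (j : Fin (r + 1)) : c j < ℓ := lt_of_le_of_lt (c_ub hℓ hc hlast j) (by omega)

/-- The left boundary vertex of each right vertex is an edge. -/
lemma Ec_boundary_edge (q : Fin r) :
    ((⟨c q.castSucc, c_lt hℓ hc hlast q.castSucc⟩ : Fin ℓ), q) ∈ Ec ℓ r c :=
  mem_Ec.mpr ⟨le_rfl, hc (Fin.castSucc_le_succ q)⟩

omit hℓ hc hlast

include hℓ hr hc h0 hlast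

lemma Ec_exists_edge (p : Fin ℓ) : ∃ q : Fin r, (p, q) ∈ Ec ℓ r c := by
  classical
  set J : Finset (Fin (r + 1)) := Finset.univ.filter (fun j => c j ≤ p.val) with hJ
  have hJne : J.Nonempty := ⟨0, by simp [hJ, h0]⟩
  set j0 := J.max' hJne with hj0
  have hj0mem : c j0 ≤ p.val := by
    have := J.max'_mem hJne
    simp only [hJ, Finset.mem_filter] at this
    exact this.2
  by_cases hl : (j0 : ℕ) < r
  · refine ⟨⟨j0, hl⟩, mem_Ec.mpr ⟨?_, ?_⟩⟩
    · have : (⟨j0, hl⟩ : Fin r).castSucc = j0 := by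
        simp [Fin.ext_iff]
      rw [this]; exact hj0mem
    · by_contra hcon
      push_neg at hcon
      have hmem : (⟨j0, hl⟩ : Fin r).succ ∈ J := by
        simp only [hJ, Finset.mem_filter, Finset.mem_univ, true_and]
        exact le_of_lt hcon
      have := J.le_max' _ hmem
      rw [← hj0, Fin.le_def] at this
      simp at this
  · -- j0 = last, so c (last) ≤ p, i.e. p = ℓ - 1
    have hj0last : j0 = Fin.last r := by
      have := j0.isLt; rw [Fin.ext_iff]; simp; omega
    have hp : p.val = ℓ - 1 := by
      have h1 := c_ub hℓ hc hlast (Fin.last r)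
      have h2 : c (Fin.last r) ≤ p.val := hj0last ▸ hj0mem
      have := p.isLt
      omega
    refine ⟨⟨r - 1, by omega⟩, mem_Ec.mpr ⟨?_, ?_⟩⟩
    · calc c (⟨r - 1, by omega⟩ : Fin r).castSucc ≤ c (Fin.last r) := hc (Fin.le_last _)
        _ = ℓ - 1 := hlast
        _ = p.val := hp.symm
    · have hsucc : (⟨r - 1, by omega⟩ : Fin r).succ = Fin.last r := by
        rw [Fin.ext_iff]; simp; omega
      rw [hsucc, hlast, hp]

lemma Ec_connected : (bipartiteGraph ℓ r (Ec ℓ r c)).Connected := by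
  rw [SimpleGraph.connected_iff]
  refine ⟨?_, ⟨Sum.inr ⟨0, hr⟩⟩⟩
  have key : ∀ x : Fin ℓ ⊕ Fin r,
      (bipartiteGraph ℓ r (Ec ℓ r c)).Reachable x (Sum.inr ⟨0, hr⟩) := by
    have reach_r : ∀ m : ℕ, ∀ hm : m < r,
        (bipartiteGraph ℓ r (Ec ℓ r c)).Reachable (Sum.inr ⟨m, hm⟩) (Sum.inr ⟨0, hr⟩) := by
      intro m
      induction m with
      | zero => intro hm; rfl
      | succ k ih =>
        intro hm
        have hk : k < r := by omega
        set q1 : Fin r := ⟨k + 1, hm⟩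
        set p1 : Fin ℓ := ⟨c q1.castSucc, c_lt hℓ hc hlast q1.castSucc⟩
        have e1 : (p1, q1) ∈ Ec ℓ r c := Ec_boundary_edge hℓ hc hlast q1
        have e2 : (p1, (⟨k, hk⟩ : Fin r)) ∈ Ec ℓ r c := by
          refine mem_Ec.mpr ⟨?_, ?_⟩
        -- c ⟨k⟩ ≤ c ⟨k+1⟩ = p1 and p1 = c ⟨k+1⟩ ≤ c ⟨k⟩.succ = c ⟨k+1⟩
          · exact hc (by rw [Fin.le_def]; simp [q1])
          · have : (⟨k, hk⟩ : Fin r).succ = q1.castSucc := by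
              rw [Fin.ext_iff]; simp [q1]
            rw [this]
        have a1 : (bipartiteGraph ℓ r (Ec ℓ r c)).Adj (Sum.inr q1) (Sum.inl p1) :=
          (bg_adj_inl_inr.mpr e1).symm
        have a2 : (bipartiteGraph ℓ r (Ec ℓ r c)).Adj (Sum.inl p1) (Sum.inr ⟨k, hk⟩) :=
          bg_adj_inl_inr.mpr e2
        exact (a1.reachable.trans a2.reachable).trans (ih hk)
    intro x
    match x with
    | Sum.inr q =>
      have : q = ⟨q.val, q.isLt⟩ := by simp
      rw [this]
      exact reach_r q.val q.isLt
    | Sum.inl p =>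
      obtain ⟨q, hq⟩ := Ec_exists_edge hℓ hr hc h0 hlast p
      refine ((bg_adj_inl_inr.mpr hq).reachable).trans ?_
      have : q = ⟨q.val, q.isLt⟩ := by simp
      rw [this]
      exact reach_r q.val q.isLt
  intro x y
  exact (key x).trans (key y).symm

lemma Ec_isTree : (bipartiteGraph ℓ r (Ec ℓ r c)).IsTree :=
  ⟨Ec_connected hℓ hr hc h0 hlast, bg_acyclic (Ec_NC hc)⟩

end staircase

/-! ### Walk invariants -/

lemma reach_invariant {V : Type*} {G : SimpleGraph V} {φ : V → Prop}
    (h : ∀ x y, G.Adj x y → (φ x ↔ φ y)) {x y : V} (hxy : G.Reachable x y) : φ x ↔ φ y := by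
  obtain ⟨w⟩ := hxy
  induction w with
  | nil => rfl
  | cons ha _ ih => exact (h _ _ ha).trans ih

/-! ### Structure of noncrossing trees -/

section structure_sec

variable {ℓ r : ℕ} {E : Finset (Fin ℓ × Fin r)} (hℓ : 1 ≤ ℓ) (hr : 1 ≤ r)
  (hT : (bipartiteGraph ℓ r E).IsTree) (hnc : NC E)

include hℓ hT

lemma exists_edge_right (q : Fin r) : ∃ p : Fin ℓ, (p, q) ∈ E := by
  have hreach := hT.isConnected.preconnected (Sum.inr q) (Sum.inl ⟨0, hℓ⟩)
  obtain ⟨w⟩ := hreach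
  have hlen : 0 < w.length := by
    rcases Nat.eq_zero_or_pos w.length with h | h
    · exact absurd (SimpleGraph.Walk.eq_of_length_eq_zero h) (by simp)
    · exact h
  have hadj := w.adj_getVert_succ hlen
  rw [SimpleGraph.Walk.getVert_zero] at hadj
  obtain ⟨p, -, hp⟩ := bg_adj_inr hadj
  exact ⟨p, hp⟩

omit hℓ
include hr

lemma exists_edge_left (p : Fin ℓ) : ∃ q : Fin r, (p, q) ∈ E := by
  have hreach := hT.isConnected.preconnected (Sum.inl p) (Sum.inr ⟨0, hr⟩)
  obtain ⟨w⟩ := hreach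
  have hlen : 0 < w.length := by
    rcases Nat.eq_zero_or_pos w.length with h | h
    · exact absurd (SimpleGraph.Walk.eq_of_length_eq_zero h) (by simp)
    · exact h
  have hadj := w.adj_getVert_succ hlen
  rw [SimpleGraph.Walk.getVert_zero] at hadj
  obtain ⟨q, -, hq⟩ := bg_adj_inl hadj
  exact ⟨q, hq⟩

end structure_sec

theorem exists_c {ℓ r : ℕ} {E : Finset (Fin ℓ × Fin r)} (hℓ : 1 ≤ ℓ) (hr : 1 ≤ r)
    (hT : (bipartiteGraph ℓ r E).IsTree) (hnc : NC E) :
    ∃ c : Fin (r + 1) → ℕ, Monotone c ∧ c 0 = 0 ∧ c (Fin.last r) = ℓ - 1 ∧ E = Ec ℓ r c := by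
  classical
  set L : Fin r → Finset (Fin ℓ) := fun q => (E.filter (fun e => e.2 = q)).image Prod.fst
    with hLdef
  have memL : ∀ (q : Fin r) (p : Fin ℓ), p ∈ L q ↔ (p, q) ∈ E := by
    intro q p
    simp only [hLdef, Finset.mem_image, Finset.mem_filter, Prod.exists]
    constructor
    · rintro ⟨a, b, ⟨hab, rfl⟩, rfl⟩; exact hab
    · intro h; exact ⟨p, q, ⟨h, rfl⟩, rfl⟩
  have hne : ∀ q, (L q).Nonempty := fun q => by
    obtain ⟨p, hp⟩ := exists_edge_right hℓ hT q
    exact ⟨p, (memL q p).mpr hp⟩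
  set A : Fin r → ℕ := fun q => ((L q).min' (hne q)).val with hAdef
  set B : Fin r → ℕ := fun q => ((L q).max' (hne q)).val with hBdef
  have hAmem : ∀ q, ∃ p : Fin ℓ, (p, q) ∈ E ∧ p.val = A q := fun q =>
    ⟨(L q).min' (hne q), (memL _ _).mp ((L q).min'_mem (hne q)), rfl⟩
  have hBmem : ∀ q, ∃ p : Fin ℓ, (p, q) ∈ E ∧ p.val = B q := fun q =>
    ⟨(L q).max' (hne q), (memL _ _).mp ((L q).max'_mem (hne q)), rfl⟩
  have f1 : ∀ (q : Fin r) (p : Fin ℓ), (p, q) ∈ E → A q ≤ p.val ∧ p.val ≤ B q := by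
    intro q p hp
    exact ⟨(L q).min'_le p ((memL q p).mpr hp), (L q).le_max' p ((memL q p).mpr hp)⟩
  have f3 : ∀ q, A q ≤ B q := by
    intro q
    obtain ⟨p, hp, hpv⟩ := hAmem q
    obtain ⟨h1, h2⟩ := f1 q p hp
    omega
  have f2 : ∀ q u : Fin r, q < u → B q ≤ A u := by
    intro q u hqu
    obtain ⟨pb, hpb, hpbv⟩ := hBmem q
    obtain ⟨pa, hpa, hpav⟩ := hAmem u
    by_contra hcon
    push_neg at hcon
    have hlt : pa < pb := by rw [Fin.lt_def]; omega
    exact hnc hpa hpb hlt hqu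
  have f4 : ∀ (q : Fin r) (p : Fin ℓ), A q ≤ p.val → p.val ≤ B q → (p, q) ∈ E := by
    intro q p h1 h2
    obtain ⟨pa, hpa, hpav⟩ := hAmem q
    obtain ⟨pb, hpb, hpbv⟩ := hBmem q
    by_cases hpa' : p = pa
    · subst hpa'; exact hpa
    by_cases hpb' : p = pb
    · subst hpb'; exact hpb
    have hlt1 : pa < p := by
      rw [Fin.lt_def]
      rcases Nat.lt_or_ge pa.val p.val with h | h
      · exact h
      · exact absurd (Fin.ext (by omega)) hpa'
    have hlt2 : p < pb := by
      rw [Fin.lt_def]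
      rcases Nat.lt_or_ge p.val pb.val with h | h
      · exact h
      · exact absurd (Fin.ext (by omega)) hpb'
    obtain ⟨u, hu⟩ := exists_edge_left hr hT p
    have huq : ¬ u < q := fun h => hnc hpa hu hlt1 h
    have hqu : ¬ q < u := fun h => hnc hu hpb hlt2 h
    have : u = q := le_antisymm (not_lt.mp hqu) (not_lt.mp huq)
    subst this
    exact hu
  have f5 : ∀ k0 k1 : Fin r, (k1 : ℕ) = (k0 : ℕ) + 1 → A k1 ≤ B k0 := by
    intro k0 k1 hk01
    by_contra hcon
    push_neg at hcon
    set φ : Fin ℓ ⊕ Fin r → Prop := fun x =>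
      match x with
      | Sum.inl p => p.val ≤ B k0
      | Sum.inr u => u.val ≤ k0.val
      with hφ
    have hcore : ∀ (p : Fin ℓ) (u : Fin r), (p, u) ∈ E → (p.val ≤ B k0 ↔ u.val ≤ k0.val) := by
      intro p u hpu
      obtain ⟨hA1, hB1⟩ := f1 u p hpu
      by_cases h : u.val ≤ k0.val
      · have hBle : B u ≤ B k0 := by
          rcases Nat.lt_or_ge u.val k0.val with h' | h'
          · calc B u ≤ A k0 := f2 u k0 (by rw [Fin.lt_def]; exact h')
              _ ≤ B k0 := f3 _
          · have : u = k0 := Fin.ext (by omega)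
            rw [this]
        simp only [h, iff_true]
        omega
      · push_neg at h
        have hAge : A k1 ≤ A u := by
          rcases Nat.lt_or_ge k1.val u.val with h' | h'
          · calc A k1 ≤ B k1 := f3 _
              _ ≤ A u := f2 k1 u (by rw [Fin.lt_def]; exact h')
          · have : u = k1 := Fin.ext (by omega)
            rw [this]
        simp only [Nat.not_le.mpr h, iff_false, not_le]
        omega
    have hadj : ∀ x y, (bipartiteGraph ℓ r E).Adj x y → (φ x ↔ φ y) := by
      intro x y hxy
      rcases bg_adj.mp hxy with ⟨p, u, hpu, rfl, rfl⟩ | ⟨p, u, hpu, rfl, rfl⟩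
      · exact hcore p u hpu
      · exact (hcore p u hpu).symm
    have hreach := hT.isConnected.preconnected (Sum.inr k0) (Sum.inr k1)
    have := reach_invariant hadj hreach
    simp only [hφ] at this
    omega
  have f6 : ∀ q0 : Fin r, (q0 : ℕ) = 0 → A q0 = 0 := by
    intro q0 hq0
    obtain ⟨u, hu⟩ := exists_edge_left hr hT ⟨0, hℓ⟩
    have h1 := (f1 u _ hu).1
    have hv : (⟨0, hℓ⟩ : Fin ℓ).val = 0 := rfl
    rcases Nat.eq_zero_or_pos u.val with h | h
    · have : u = q0 := Fin.ext (by omega)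
      subst this; omega
    · have h2 : A q0 ≤ B q0 := f3 _
      have h3 : B q0 ≤ A u := f2 _ _ (by rw [Fin.lt_def]; omega)
      omega
  have f7 : ∀ qr : Fin r, (qr : ℕ) = r - 1 → B qr = ℓ - 1 := by
    intro qr hqr
    obtain ⟨u, hu⟩ := exists_edge_left hr hT ⟨ℓ - 1, by omega⟩
    have h1 := (f1 u _ hu).2
    have hv : (⟨ℓ - 1, by omega⟩ : Fin ℓ).val = ℓ - 1 := rfl
    rw [hv] at h1
    have hub : ∀ q, B q ≤ ℓ - 1 := by
      intro q
      obtain ⟨p, hp, hpv⟩ := hBmem q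
      have := p.isLt
      omega
    rcases Nat.lt_or_ge u.val (r - 1) with h | h
    · have h3 : B u ≤ A qr := f2 _ _ (by rw [Fin.lt_def]; omega)
      have h4 : A qr ≤ B qr := f3 _
      have := hub qr
      omega
    · have hu' : u = qr := Fin.ext (by have := u.isLt; omega)
      rw [hu'] at h1
      have := hub qr
      omega
  refine ⟨fun j => if h : j.val < r then A ⟨j.val, h⟩ else ℓ - 1, ?_, ?_, ?_, ?_⟩
  · -- monotone
    intro j k hjk
    rw [Fin.le_def] at hjk
    by_cases hj : j.val < r
    · by_cases hk : k.val < r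
      · simp only [dif_pos hj, dif_pos hk]
        rcases Nat.lt_or_ge j.val k.val with h | h
        · calc A ⟨j.val, hj⟩ ≤ B ⟨j.val, hj⟩ := f3 _
            _ ≤ A ⟨k.val, hk⟩ := f2 _ _ (by rw [Fin.lt_def]; exact h)
        · have hjk' : (⟨j.val, hj⟩ : Fin r) = ⟨k.val, hk⟩ := Fin.ext (show j.val = k.val by omega)
          rw [hjk']
      · simp only [dif_pos hj, dif_neg hk]
        obtain ⟨p, hp, hpv⟩ := hAmem ⟨j.val, hj⟩
        have := p.isLt
        omega
    · have hk : ¬ k.val < r := by omega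
      simp [dif_neg hj, dif_neg hk]
  · -- c 0 = 0
    have h0r : (0 : Fin (r + 1)).val < r := by simp; omega
    show (if h : (0 : Fin (r + 1)).val < r then A ⟨(0 : Fin (r + 1)).val, h⟩ else ℓ - 1) = 0
    rw [dif_pos h0r]
    exact f6 _ rfl
  · -- c last = ℓ - 1
    simp [Fin.val_last]
  · -- E = Ec
    ext ⟨p, q⟩
    rw [mem_Ec]
    have hcast : (q.castSucc : Fin (r + 1)).val = q.val := rfl
    have hsucc : (q.succ : Fin (r + 1)).val = q.val + 1 := rfl
    have hcastlt : (q.castSucc : Fin (r + 1)).val < r := by rw [hcast]; exact q.isLt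
    have e1 : (if h : (q.castSucc : Fin (r + 1)).val < r then A ⟨(q.castSucc).val, h⟩ else ℓ - 1)
        = A q := by
      rw [dif_pos hcastlt]
      congr 1
    have e2 : (if h : (q.succ : Fin (r + 1)).val < r then A ⟨(q.succ).val, h⟩ else ℓ - 1)
        = B q := by
      by_cases h : q.val + 1 < r
      · have hlt : (q.succ : Fin (r + 1)).val < r := by rw [hsucc]; exact h
        rw [dif_pos hlt]
        have hle : A ⟨(q.succ).val, hlt⟩ ≤ B q := f5 q ⟨(q.succ).val, hlt⟩ (by rw [hsucc])
        have hge : B q ≤ A ⟨(q.succ).val, hlt⟩ := f2 _ _ (by rw [Fin.lt_def]; rw [hsucc]; omega)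
        omega
      · rw [dif_neg (by rw [hsucc]; omega)]
        exact (f7 q (by have := q.isLt; omega)).symm
    rw [e1, e2]
    constructor
    · intro h; exact ⟨(f1 q p h).1, (f1 q p h).2⟩
    · intro h; exact f4 q p h.1 h.2

/-! ### Injectivity of the staircase map -/

lemma Ec_inj {ℓ r : ℕ} (hℓ : 1 ≤ ℓ) (hr : 1 ≤ r) {c c' : Fin (r + 1) → ℕ}
    (hc : Monotone c) (hlast : c (Fin.last r) = ℓ - 1)
    (hc' : Monotone c') (hlast' : c' (Fin.last r) = ℓ - 1)
    (h : Ec ℓ r c = Ec ℓ r c') : c = c' := by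
  funext j
  by_cases hj : j.val < r
  · set jF : Fin r := ⟨j.val, hj⟩ with hjF
    have hjc : jF.castSucc = j := Fin.ext rfl
    have key : ∀ (d d' : Fin (r + 1) → ℕ), Monotone d → d (Fin.last r) = ℓ - 1 →
        Monotone d' → d' (Fin.last r) = ℓ - 1 → Ec ℓ r d = Ec ℓ r d' →
        d' jF.castSucc ≤ d jF.castSucc := by
      intro d d' hd hdl hd' hdl' hEq
      have hedge := Ec_boundary_edge hℓ hd hdl jF
      rw [hEq, mem_Ec] at hedge
      exact hedge.1
    have h1 := key c c' hc hlast hc' hlast' h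
    have h2 := key c' c hc' hlast' hc hlast h.symm
    rw [hjc] at h1 h2
    omega
  · have : j = Fin.last r := Fin.ext (by have := j.isLt; simp [Fin.val_last]; omega)
    rw [this, hlast, hlast']

/-! ### Counting: multiset helper lemmas -/

lemma multiset_card_sum {β α : Type*} (s : Finset β) (f : β → Multiset α) :
    Multiset.card (∑ i ∈ s, f i) = ∑ i ∈ s, Multiset.card (f i) := by
  classical
  induction s using Finset.induction with
  | empty => simp
  | insert _ _ h ih => simp [Finset.sum_insert h, ih]

lemma multiset_countP_sum {β α : Type*} (p : α → Prop) [DecidablePred p] (s : Finset β)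
    (f : β → Multiset α) :
    Multiset.countP p (∑ i ∈ s, f i) = ∑ i ∈ s, Multiset.countP p (f i) := by
  classical
  induction s using Finset.induction with
  | empty => simp
  | insert _ _ h ih => simp [Finset.sum_insert h, Multiset.countP_add, ih]

lemma multiset_countP_replicate {α : Type*} (p : α → Prop) [DecidablePred p] (n : ℕ) (a : α) :
    Multiset.countP p (Multiset.replicate n a) = if p a then n else 0 := by
  induction n with
  | zero => simp
  | succ n ih =>
    rw [Multiset.replicate_succ, Multiset.countP_cons, ih]
    split_ifs <;> omega

lemma multiset_countP_mono {α : Type*} (p q : α → Prop) [DecidablePred p] [DecidablePred q]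
    (h : ∀ a, p a → q a) (s : Multiset α) : Multiset.countP p s ≤ Multiset.countP q s := by
  induction s using Multiset.induction_on with
  | empty => simp
  | cons a s ih =>
    rw [Multiset.countP_cons, Multiset.countP_cons]
    have := h a
    split_ifs <;> simp_all <;> omega

lemma multiset_countP_split {r : ℕ} (s : Multiset (Fin r)) (q : Fin r) :
    Multiset.countP (fun a : Fin r => a.val < q.val + 1) s
      = Multiset.countP (fun a : Fin r => a.val < q.val) s + Multiset.count q s := by
  induction s using Multiset.induction_on with
  | empty => simp
  | cons a s ih =>
    rw [Multiset.countP_cons, Multiset.countP_cons, Multiset.count_cons, ih]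
    by_cases hqa : a = q
    · subst hqa
      simp only [if_pos rfl]
      split_ifs <;> omega
    · have : ¬ (q = a) := fun h => hqa h.symm
      simp only [this, if_false]
      have hva : a.val ≠ q.val := fun h => hqa (Fin.ext h)
      split_ifs <;> omega

lemma range_telescope (f : ℕ → ℕ) (hm : ∀ i, f i ≤ f (i + 1)) (n : ℕ) :
    ∑ i ∈ Finset.range n, (f (i + 1) - f i) = f n - f 0 := by
  induction n with
  | zero => simp
  | succ n ih =>
    rw [Finset.sum_range_succ, ih]
    have h0n : f 0 ≤ f n := (monotone_nat_of_le_succ hm) (Nat.zero_le n)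
    have := hm n
    omega

/-! ### The multiset of a staircase -/

def msOf (r : ℕ) (c : Fin (r + 1) → ℕ) : Multiset (Fin r) :=
  ∑ q : Fin r, Multiset.replicate (c q.succ - c q.castSucc) q

lemma msOf_count {r : ℕ} (c : Fin (r + 1) → ℕ) (q0 : Fin r) :
    Multiset.count q0 (msOf r c) = c q0.succ - c q0.castSucc := by
  classical
  rw [msOf, Multiset.count_sum']
  rw [Finset.sum_eq_single q0]
  · rw [Multiset.count_replicate_self]
  · intro b _ hb
    rw [Multiset.count_replicate, if_neg hb]
  · intro h
    exact absurd (Finset.mem_univ q0) h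

lemma msOf_card {r : ℕ} (c : Fin (r + 1) → ℕ) (hc : Monotone c) (h0 : c 0 = 0) :
    Multiset.card (msOf r c) = c (Fin.last r) := by
  rw [msOf, multiset_card_sum]
  simp only [Multiset.card_replicate]
  set f : ℕ → ℕ := fun i => c ⟨min i r, by omega⟩ with hf
  have hmono : ∀ i, f i ≤ f (i + 1) := by
    intro i
    apply hc
    rw [Fin.le_def]
    simp only
    omega
  have hterm : ∀ q : Fin r, c q.succ - c q.castSucc = f (q.val + 1) - f q.val := by
    intro q
    have h1 : f (q.val + 1) = c q.succ := by
      simp only [hf]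
      congr 1
      exact Fin.ext (by simp [Fin.val_succ]; try omega)
    have h2 : f q.val = c q.castSucc := by
      simp only [hf]
      congr 1
      exact Fin.ext (by simp [Fin.coe_castSucc]; try omega)
    rw [h1, h2]
  calc ∑ q : Fin r, (c q.succ - c q.castSucc) = ∑ q : Fin r, (f (q.val + 1) - f q.val) :=
        Finset.sum_congr rfl (fun q _ => hterm q)
    _ = ∑ i ∈ Finset.range r, (f (i + 1) - f i) :=
        Fin.sum_univ_eq_sum_range (fun i => f (i + 1) - f i) r
    _ = f r - f 0 := range_telescope f hmono r
    _ = c (Fin.last r) := by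
        have hr' : f r = c (Fin.last r) := by
          simp only [hf]
          congr 1
          exact Fin.ext (by simp [Fin.val_last]; try omega)
        have h0' : f 0 = c 0 := by
          simp only [hf]
          congr 1
        rw [hr', h0', h0]
        omega

lemma msOf_countP {r : ℕ} (c : Fin (r + 1) → ℕ) (hc : Monotone c) (h0 : c 0 = 0)
    (j : Fin (r + 1)) :
    Multiset.countP (fun q : Fin r => q.val < j.val) (msOf r c) = c j := by
  classical
  rw [msOf, multiset_countP_sum]
  simp only [multiset_countP_replicate]
  set f : ℕ → ℕ := fun i => c ⟨min i r, by omega⟩ with hf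
  have hmono : ∀ i, f i ≤ f (i + 1) := by
    intro i
    apply hc
    rw [Fin.le_def]
    simp only
    omega
  have hterm : ∀ q : Fin r, (if q.val < j.val then c q.succ - c q.castSucc else 0)
      = (if q.val < j.val then f (q.val + 1) - f q.val else 0) := by
    intro q
    have h1 : f (q.val + 1) = c q.succ := by
      simp only [hf]; congr 1; exact Fin.ext (by simp [Fin.val_succ]; try omega)
    have h2 : f q.val = c q.castSucc := by
      simp only [hf]; congr 1; exact Fin.ext (by simp [Fin.coe_castSucc]; try omega)
    rw [h1, h2]
  calc ∑ q : Fin r, (if q.val < j.val then c q.succ - c q.castSucc else 0)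
      = ∑ q : Fin r, (if q.val < j.val then f (q.val + 1) - f q.val else 0) :=
        Finset.sum_congr rfl (fun q _ => hterm q)
    _ = ∑ i ∈ Finset.range r, (if i < j.val then f (i + 1) - f i else 0) :=
        Fin.sum_univ_eq_sum_range (fun i => if i < j.val then f (i + 1) - f i else 0) r
    _ = ∑ i ∈ (Finset.range r).filter (· < j.val), (f (i + 1) - f i) :=
        (Finset.sum_filter _ _).symm
    _ = ∑ i ∈ Finset.range j.val, (f (i + 1) - f i) := by
        congr 1
        ext i
        simp only [Finset.mem_filter, Finset.mem_range]
        have := j.isLt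
        omega
    _ = f j.val - f 0 := range_telescope f hmono j.val
    _ = c j := by
        have hj' : f j.val = c j := by
          simp only [hf]
          congr 1
          exact Fin.ext (by simp; try omega)
        have h0' : f 0 = c 0 := by
          simp only [hf]; congr 1
        rw [hj', h0', h0]
        omega

/-! ### The stars-and-bars equivalence -/

def stairEquiv (ℓ r : ℕ) :
    {c : Fin (r + 1) → ℕ // Monotone c ∧ c 0 = 0 ∧ c (Fin.last r) = ℓ - 1}
      ≃ Sym (Fin r) (ℓ - 1) where
  toFun c := ⟨msOf r c.1, by rw [msOf_card c.1 c.2.1 c.2.2.1, c.2.2.2]⟩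
  invFun s := ⟨fun j => Multiset.countP (fun q : Fin r => q.val < j.val) s.1,
    by
      intro j k hjk
      rw [Fin.le_def] at hjk
      exact multiset_countP_mono _ _ (fun a ha => by omega) s.1,
    by
      simp,
    by
      show Multiset.countP (fun q : Fin r => q.val < (Fin.last r).val) s.1 = ℓ - 1
      rw [Multiset.countP_eq_card.mpr (fun a _ => by simp only [Fin.val_last]; exact a.isLt), s.2]⟩
  left_inv c := Subtype.ext (funext fun j => msOf_countP c.1 c.2.1 c.2.2.1 j)
  right_inv s := by
    apply Subtype.ext
    apply Multiset.ext.mpr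
    intro q
    rw [msOf_count]
    show Multiset.countP (fun a : Fin r => a.val < (q.succ : Fin (r + 1)).val) s.1
        - Multiset.countP (fun a : Fin r => a.val < (q.castSucc : Fin (r + 1)).val) s.1
      = Multiset.count q s.1
    have h1 : Multiset.countP (fun a : Fin r => a.val < (q.succ : Fin (r + 1)).val) s.1
        = Multiset.countP (fun a : Fin r => a.val < q.val) s.1 + Multiset.count q s.1 := by
      have := multiset_countP_split s.1 q
      simpa [Fin.val_succ] using this
    have h2 : Multiset.countP (fun a : Fin r => a.val < (q.castSucc : Fin (r + 1)).val) s.1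
        = Multiset.countP (fun a : Fin r => a.val < q.val) s.1 := rfl
    rw [h1, h2]
    omega

/-- The number of bipartite noncrossing trees with `ℓ` ordered left vertices and `r`
ordered right vertices equals `C(ℓ+r-2, ℓ-1)`. -/
theorem stmt1 (ℓ r : ℕ) (hℓ : 1 ≤ ℓ) (hr : 1 ≤ r) :
    {E : Finset (Fin ℓ × Fin r) |
        (bipartiteGraph ℓ r E).IsTree ∧
        ¬ ∃ (p t : Fin ℓ) (q u : Fin r),
            (p, q) ∈ E ∧ (t, u) ∈ E ∧ p < t ∧ u < q}.ncard
      = (ℓ + r - 2).choose (ℓ - 1) := by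
  classical
  have hsetEq : {E : Finset (Fin ℓ × Fin r) |
        (bipartiteGraph ℓ r E).IsTree ∧
        ¬ ∃ (p t : Fin ℓ) (q u : Fin r),
            (p, q) ∈ E ∧ (t, u) ∈ E ∧ p < t ∧ u < q}
      = {E : Finset (Fin ℓ × Fin r) | (bipartiteGraph ℓ r E).IsTree ∧ NC E} := by
    ext E
    simp only [Set.mem_setOf_eq, and_congr_right_iff]
    intro _
    constructor
    · intro h p t q u e1 e2 h1 h2
      exact h ⟨p, t, q, u, e1, e2, h1, h2⟩
    · rintro hnc ⟨p, t, q, u, e1, e2, h1, h2⟩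
      exact hnc e1 e2 h1 h2
  rw [hsetEq, ← Nat.card_coe_set_eq]
  set P := {c : Fin (r + 1) → ℕ // Monotone c ∧ c 0 = 0 ∧ c (Fin.last r) = ℓ - 1} with hP
  set S := {E : Finset (Fin ℓ × Fin r) | (bipartiteGraph ℓ r E).IsTree ∧ NC E} with hS
  have Fdef : ∀ c : P, Ec ℓ r c.1 ∈ S := by
    intro c
    exact ⟨Ec_isTree hℓ hr c.2.1 c.2.2.1 c.2.2.2, Ec_NC c.2.1⟩
  set F : P → ↥S := fun c => ⟨Ec ℓ r c.1, Fdef c⟩ with hF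
  have hbij : Function.Bijective F := by
    constructor
    · intro c1 c2 h
      rw [hF, Subtype.mk.injEq] at h
      exact Subtype.ext (Ec_inj hℓ hr c1.2.1 c1.2.2.2 c2.2.1 c2.2.2.2 h)
    · rintro ⟨E, hE1, hE2⟩
      obtain ⟨c, hmono, h0, hlast, hEq⟩ := exists_c hℓ hr hE1 hE2
      exact ⟨⟨c, hmono, h0, hlast⟩, Subtype.ext hEq.symm⟩
  rw [Nat.card_congr (Equiv.ofBijective F hbij).symm,
    Nat.card_congr (stairEquiv ℓ r), Nat.card_eq_fintype_card, Sym.card_sym_eq_choose,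
    Fintype.card_fin]
  congr 1
  omega
end
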